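/- Let R be the direct limit of a directed system of commutative rings with structural maps ε_j : R_j → R, and let s : Spec(R) → invlim Spec(R_i) be the canonical map q ↦ (ε_i^{-1}(q)). Then for any j ∈ I and a ∈ R_j, the preimage under the projection π_j of the basic open set D(a) ⊆ Spec(R_j) equals the image under s of the basic open set D(ε_j(a)) ⊆ Spec(R). -/

import Mathlib

section Aux

variable {ι : Type*} [Preorder ι] [IsDirected ι (· ≤ ·)] [Nonempty ι]
    (G : ι → Type*) [∀ i, CommRing (G i)]
    (f' : ∀ i j, i ≤ j → G i →+* G j) [DirectedSystem G fun i j h => f' i j h]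

omit [Nonempty ι] in
/-- If two elements have equal images in the direct limit, they get identified at some stage. -/
theorem aux_eq_of {i k : ι} {r : G i} {s : G k}
    (h : Ring.DirectLimit.of G (fun i j h => f' i j h) i r =
      Ring.DirectLimit.of G (fun i j h => f' i j h) k s) :
    ∃ (m : ι) (hi : i ≤ m) (hk : k ≤ m), f' i m hi r = f' k m hk s := by
  obtain ⟨l, hil, hkl⟩ := exists_ge_ge i k
  have h0 : Ring.DirectLimit.of G (fun i j h => f' i j h) l (f' i l hil r - f' k l hkl s) = 0 := by
    rw [map_sub, Ring.DirectLimit.of_f, Ring.DirectLimit.of_f, h, sub_self]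
  obtain ⟨m, hlm, hm⟩ := Ring.DirectLimit.of.zero_exact h0
  refine ⟨m, hil.trans hlm, hkl.trans hlm, ?_⟩
  rw [map_sub] at hm
  have h1 := DirectedSystem.map_map (f := fun i j h => f' i j h) hil hlm r
  have h2 := DirectedSystem.map_map (f := fun i j h => f' i j h) hkl hlm s
  rw [h1, h2] at hm
  exact sub_eq_zero.mp hm

variable {G f'}

/-- Given a compatible family of primes, the prime ideal of the direct limit. -/
noncomputable def auxPrime (p : ∀ i, PrimeSpectrum (G i))
    (hp : ∀ (i k : ι) (h : i ≤ k), PrimeSpectrum.comap (f' i k h) (p k) = p i) :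
    PrimeSpectrum (Ring.DirectLimit G fun i j h => f' i j h) := by
  have key : ∀ {i k : ι} (h : i ≤ k) (r : G i),
      r ∈ (p i).asIdeal ↔ f' i k h r ∈ (p k).asIdeal := by
    intro i k h r
    conv_lhs => rw [← hp i k h]
    rfl
  refine ⟨⟨⟨⟨{x | ∃ i r, Ring.DirectLimit.of G (fun i j h => f' i j h) i r = x
      ∧ r ∈ (p i).asIdeal}, ?_⟩, ?_⟩, ?_⟩, ?_, ?_⟩
  · intro x y hx hy
    obtain ⟨i, r, hr, hri⟩ := hx
    obtain ⟨k, s, hs, hsk⟩ := hy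
    obtain ⟨l, hil, hkl⟩ := exists_ge_ge i k
    refine ⟨l, f' i l hil r + f' k l hkl s, ?_, ?_⟩
    · rw [map_add, Ring.DirectLimit.of_f, Ring.DirectLimit.of_f, hr, hs]
    · exact add_mem ((key hil r).mp hri) ((key hkl s).mp hsk)
  · exact ⟨Classical.arbitrary ι, 0, by rw [map_zero], zero_mem _⟩
  · intro c x hx
    obtain ⟨i, r, hr, hri⟩ := hx
    obtain ⟨k, s, hs⟩ := Ring.DirectLimit.exists_of c
    obtain ⟨l, hil, hkl⟩ := exists_ge_ge i k
    refine ⟨l, f' k l hkl s * f' i l hil r, ?_, ?_⟩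
    · rw [map_mul, Ring.DirectLimit.of_f, Ring.DirectLimit.of_f, hr, hs]; rfl
    · exact Ideal.mul_mem_left _ _ ((key hil r).mp hri)
  · -- 1 is not in the ideal
    intro htop
    have h1 : ∃ i r, Ring.DirectLimit.of G (fun i j h => f' i j h) i r = 1
        ∧ r ∈ (p i).asIdeal := by
      have : (1 : Ring.DirectLimit G fun i j h => f' i j h) ∈ (⊤ : Ideal _) := trivial
      rw [← htop] at this
      exact this
    obtain ⟨i, r, hr, hri⟩ := h1
    obtain ⟨m, him, hkm, heq⟩ := aux_eq_of G f' (hr.trans (map_one (Ring.DirectLimit.of G (fun i j h => f' i j h) i)).symm)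
    rw [map_one] at heq
    exact (p m).isPrime.ne_top (Ideal.eq_top_iff_one _ |>.mpr (heq ▸ (key him r).mp hri))
  · -- primality
    intro x y hxy'
    obtain ⟨i, r, hr, hri⟩ := hxy'
    obtain ⟨k, s, hs⟩ := Ring.DirectLimit.exists_of x
    obtain ⟨l, t, ht⟩ := Ring.DirectLimit.exists_of y
    obtain ⟨m, hkm, hlm⟩ := exists_ge_ge k l
    have hxy : Ring.DirectLimit.of G (fun i j h => f' i j h) m
        (f' k m hkm s * f' l m hlm t) = x * y := by
      rw [map_mul, Ring.DirectLimit.of_f, Ring.DirectLimit.of_f, hs, ht]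
    obtain ⟨n, him, hmn, heq⟩ := aux_eq_of G f' (hr.trans hxy.symm)
    rw [map_mul] at heq
    have : f' i n him r ∈ (p n).asIdeal := (key him r).mp hri
    rw [heq] at this
    rcases (p n).isPrime.mem_or_mem this with hmem | hmem
    · left
      refine ⟨n, f' m n hmn (f' k m hkm s), ?_, hmem⟩
      rw [Ring.DirectLimit.of_f, Ring.DirectLimit.of_f, hs]
    · right
      refine ⟨n, f' m n hmn (f' l m hlm t), ?_, hmem⟩
      rw [Ring.DirectLimit.of_f, Ring.DirectLimit.of_f, ht]

theorem mem_auxPrime_iff (p : ∀ i, PrimeSpectrum (G i))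
    (hp : ∀ (i k : ι) (h : i ≤ k), PrimeSpectrum.comap (f' i k h) (p k) = p i)
    (i : ι) (r : G i) :
    Ring.DirectLimit.of G (fun i j h => f' i j h) i r ∈ (auxPrime p hp).asIdeal ↔
      r ∈ (p i).asIdeal := by
  have key : ∀ {i k : ι} (h : i ≤ k) (r : G i),
      r ∈ (p i).asIdeal ↔ f' i k h r ∈ (p k).asIdeal := by
    intro i k h r
    conv_lhs => rw [← hp i k h]
    rfl
  constructor
  · rintro ⟨k, s, hs, hsk⟩
    obtain ⟨m, hkm, him, heq⟩ := aux_eq_of G f' hs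
    rw [key him r, ← heq]
    exact (key hkm s).mp hsk
  · intro h
    exact ⟨i, r, rfl, h⟩

theorem specComap_auxPrime (p : ∀ i, PrimeSpectrum (G i))
    (hp : ∀ (i k : ι) (h : i ≤ k), PrimeSpectrum.comap (f' i k h) (p k) = p i) (i : ι) :
    PrimeSpectrum.comap (Ring.DirectLimit.of G (fun i j h => f' i j h) i) (auxPrime p hp) = p i := by
  ext r
  exact mem_auxPrime_iff (f' := f') p hp i r

end Aux

/-- In the inverse limit of the prime spectra of a directed system of commutative rings,
the preimage under the `j`-th projection of the basic open set `D(a)` equals the image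
under the canonical map `s` of the basic open set `D(ε_j a)` of the spectrum of the
direct limit. -/
theorem stmt7 {ι : Type*} [Preorder ι] [IsDirected ι (· ≤ ·)] [Nonempty ι]
    (G : ι → Type*) [∀ i, CommRing (G i)]
    (f' : ∀ i j, i ≤ j → G i →+* G j) [DirectedSystem G fun i j h => f' i j h]
    (j : ι) (a : G j) :
    {p : ∀ i, PrimeSpectrum (G i) |
        (∀ (i k : ι) (h : i ≤ k), PrimeSpectrum.comap (f' i k h) (p k) = p i) ∧
          p j ∈ PrimeSpectrum.basicOpen a} =
      (fun (q : PrimeSpectrum (Ring.DirectLimit G fun i j h => f' i j h)) (i : ι) =>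
          PrimeSpectrum.comap (Ring.DirectLimit.of G (fun i j h => f' i j h) i) q) ''
        (PrimeSpectrum.basicOpen (Ring.DirectLimit.of G (fun i j h => f' i j h) j a) :
          Set (PrimeSpectrum (Ring.DirectLimit G fun i j h => f' i j h))) := by
  ext p
  simp only [Set.mem_setOf_eq, Set.mem_image, SetLike.mem_coe,
    PrimeSpectrum.mem_basicOpen]
  constructor
  · rintro ⟨hp, ha⟩
    refine ⟨auxPrime p hp, ?_, ?_⟩
    · rw [mem_auxPrime_iff p hp j a]; exact ha
    · funext i; exact specComap_auxPrime p hp i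
  · rintro ⟨q, hq, rfl⟩
    refine ⟨fun i k h => ?_, hq⟩
    rw [← PrimeSpectrum.comap_comp_apply]
    congr 1
    ext x
    simp [Ring.DirectLimit.of_f]
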